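/- Let λ > 0, let P, Q ∈ Ω_λ = {x ∈ R² : ||x|| < 1/λ}, and let r ≥ 1. Then d_F(P,Q) = (1/λ)ln r if and only if ||P/r - Q|| = (1/λ)·(r-1)/r, where d_F(P,Q) = (1/λ)ln[(√(λ²⟨P,Q-P⟩² + (1-λ²||P||²)||Q-P||²) - λ⟨P,Q-P⟩)/(√(λ²⟨P,Q-P⟩² + (1-λ²||P||²)||Q-P||²) - λ⟨Q,Q-P⟩)] for P ≠ Q and d_F(P,P) = 0. -/

import Mathlib

open RealInnerProductSpace Classical
set_option maxHeartbeats 1000000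

noncomputable def pt (a b : ℝ) : EuclideanSpace ℝ (Fin 2) :=
  (WithLp.equiv 2 (Fin 2 → ℝ)).symm ![a, b]

/-- The λ-Funk metric. -/
noncomputable def Funk (lam : ℝ) (x y : EuclideanSpace ℝ (Fin 2)) : ℝ :=
  (Real.sqrt (lam ^ 2 * ⟪x, y⟫ ^ 2 + ‖y‖ ^ 2 * (1 - lam ^ 2 * ‖x‖ ^ 2)) + lam * ⟪x, y⟫) /
    (1 - lam ^ 2 * ‖x‖ ^ 2)

/-- The λ-Funk distance. -/
noncomputable def dF (lam : ℝ) (P Q : EuclideanSpace ℝ (Fin 2)) : ℝ :=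
  if P = Q then 0
  else (1 / lam) * Real.log
    ((Real.sqrt (lam ^ 2 * ⟪P, Q - P⟫ ^ 2 + (1 - lam ^ 2 * ‖P‖ ^ 2) * ‖Q - P‖ ^ 2)
        - lam * ⟪P, Q - P⟫) /
     (Real.sqrt (lam ^ 2 * ⟪P, Q - P⟫ ^ 2 + (1 - lam ^ 2 * ‖P‖ ^ 2) * ‖Q - P‖ ^ 2)
        - lam * ⟪Q, Q - P⟫))


lemma real_main (lam p q ip nv r : ℝ) (hlam : 0 < lam) (hp0 : 0 ≤ p) (hp1 : p < 1/lam)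
    (hq0 : 0 ≤ q) (hq1 : q < 1/lam) (hnv : 0 < nv)
    (hnv2 : nv^2 = q^2 - 2*ip + p^2) (hr : 1 ≤ r) :
    (1/lam) * Real.log ((Real.sqrt (lam^2*(ip - p^2)^2 + (1 - lam^2*p^2)*nv^2) - lam*(ip - p^2)) /
      (Real.sqrt (lam^2*(ip - p^2)^2 + (1 - lam^2*p^2)*nv^2) - lam*(q^2 - ip)))
      = (1/lam) * Real.log r ↔
    lam^2*(p^2 - 2*r*ip + r^2*q^2) = (r-1)^2 := by
  have hr0 : (0:ℝ) < r := lt_of_lt_of_le one_pos hr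
  have hp2 : lam^2*p^2 < 1 := by
    have h1 : lam*p < 1 := by nlinarith [(lt_div_iff₀ hlam).mp hp1]
    nlinarith [mul_nonneg hlam.le hp0]
  have hq2 : lam^2*q^2 < 1 := by
    have h1 : lam*q < 1 := by nlinarith [(lt_div_iff₀ hlam).mp hq1]
    nlinarith [mul_nonneg hlam.le hq0]
  have hX : 0 < (1 - lam^2*p^2)*nv^2 := mul_pos (by linarith) (pow_pos hnv 2)
  have hA0 : (0:ℝ) ≤ lam^2*(ip - p^2)^2 + (1 - lam^2*p^2)*nv^2 := by positivity
  set S : ℝ := Real.sqrt (lam^2*(ip - p^2)^2 + (1 - lam^2*p^2)*nv^2) with hS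
  have hS0 : 0 ≤ S := Real.sqrt_nonneg _
  have hS2 : S^2 = lam^2*(ip - p^2)^2 + (1 - lam^2*p^2)*nv^2 := Real.sq_sqrt hA0
  have hSa : lam*(ip - p^2) < S := by nlinarith [hS2, hX, hS0]
  have hSna : -(lam*(ip - p^2)) < S := by nlinarith [hS2, hX, hS0]
  have hS2b : S^2 - (lam*(q^2 - ip))^2 = nv^2*(1 - lam^2*q^2) := by
    rw [hS2]; linear_combination lam^2*(q^2 - p^2)*hnv2
  have hnvq : 0 < nv^2*(1 - lam^2*q^2) := mul_pos (pow_pos hnv 2) (by linarith)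
  have hSb : lam*(q^2 - ip) < S := by nlinarith [hS2b, hnvq, hS0]
  have hne : S - lam*(q^2 - ip) ≠ 0 := (sub_pos.mpr hSb).ne'
  have hrl : 0 < r*lam*nv^2 := mul_pos (mul_pos hr0 hlam) (pow_pos hnv 2)
  have hfac : (S*(r-1))^2 - (lam*(ip - p^2)*(r-1) + r*lam*nv^2)^2
      = nv^2 * ((r-1)^2 - lam^2*(p^2 - 2*r*ip + r^2*q^2)) := by
    linear_combination (r-1)^2*hS2 - nv^2*lam^2*r^2*hnv2
  have hratio : 0 < (S - lam*(ip - p^2)) / (S - lam*(q^2 - ip)) :=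
    div_pos (sub_pos.mpr hSa) (sub_pos.mpr hSb)
  rw [mul_right_inj' (one_div_ne_zero hlam.ne')]
  rw [show (Real.log ((S - lam*(ip - p^2)) / (S - lam*(q^2 - ip))) = Real.log r)
      ↔ ((S - lam*(ip - p^2)) / (S - lam*(q^2 - ip)) = r) from
    ⟨fun h => Real.log_injOn_pos (Set.mem_Ioi.mpr hratio) (Set.mem_Ioi.mpr hr0) h,
     fun h => by rw [h]⟩]
  rw [div_eq_iff hne]
  constructor
  · intro h
    have hE : S*(r-1) = lam*(ip - p^2)*(r-1) + r*lam*nv^2 := by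
      linear_combination (-1)*h - r*lam*hnv2
    have hEsq : (S*(r-1))^2 = (lam*(ip - p^2)*(r-1) + r*lam*nv^2)^2 := by rw [hE]
    have h0 : nv^2 * ((r-1)^2 - lam^2*(p^2 - 2*r*ip + r^2*q^2)) = 0 := by
      rw [← hfac, hEsq]; ring
    have h2 := (mul_eq_zero.mp h0).resolve_left (by positivity)
    linarith
  · intro h
    have hEsq : (S*(r-1))^2 = (lam*(ip - p^2)*(r-1) + r*lam*nv^2)^2 := by
      have h0 : nv^2 * ((r-1)^2 - lam^2*(p^2 - 2*r*ip + r^2*q^2)) = 0 := by rw [h]; ring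
      linarith [hfac.trans h0]
    have hE : S*(r-1) = lam*(ip - p^2)*(r-1) + r*lam*nv^2 := by
      have hzero : (S*(r-1) - (lam*(ip - p^2)*(r-1) + r*lam*nv^2))
          * (S*(r-1) + (lam*(ip - p^2)*(r-1) + r*lam*nv^2)) = 0 := by
        linear_combination hEsq
      rcases mul_eq_zero.mp hzero with h1 | h1
      · linear_combination h1
      · have hge : -(lam*(ip - p^2))*(r-1) ≤ S*(r-1) :=
          mul_le_mul_of_nonneg_right hSna.le (by linarith)
        nlinarith
    linear_combination (-1)*hE - r*lam*hnv2

theorem dF_eq_log_iff (lam : ℝ) (hlam : 0 < lam) (P Q : EuclideanSpace ℝ (Fin 2))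
    (hP : ‖P‖ < 1 / lam) (hQ : ‖Q‖ < 1 / lam) (r : ℝ) (hr : 1 ≤ r) :
    dF lam P Q = (1 / lam) * Real.log r ↔
      ‖(1 / r) • P - Q‖ = (1 / lam) * ((r - 1) / r) := by
  have hr0 : (0:ℝ) < r := lt_of_lt_of_le one_pos hr
  by_cases hPQ : P = Q
  · subst hPQ
    rw [dF, if_pos rfl]
    constructor
    · intro h
      have hlog : Real.log r = 0 := by
        rcases mul_eq_zero.mp h.symm with h1 | h1
        · exact absurd h1 (one_div_ne_zero hlam.ne')
        · exact h1
      have hr1 : r = 1 := by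
        rcases Real.log_eq_zero.mp hlog with h1 | h1 | h1 <;> linarith
      subst hr1
      simp
    · intro h
      have hr1 : r = 1 := by
        by_contra hne
        have hrgt : 1 < r := lt_of_le_of_ne hr (Ne.symm hne)
        have h1r : 0 < 1 - 1/r := by
          have : 1/r < 1 := by rw [div_lt_one hr0]; exact hrgt
          linarith
        have hcomp : ‖(1/r) • P - P‖ = (1 - 1/r) * ‖P‖ := by
          have hsp : (1/r) • P - P = (1/r - 1) • P := by
            rw [sub_smul, one_smul]
          rw [hsp, norm_smul, Real.norm_eq_abs, abs_of_nonpos (by linarith)]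
          ring
        rw [hcomp] at h
        have hlt : (1 - 1/r) * ‖P‖ < (1 - 1/r) * (1/lam) :=
          mul_lt_mul_of_pos_left hP h1r
        have heq : (1 - 1/r) * (1/lam) = (1/lam) * ((r-1)/r) := by
          field_simp
        rw [heq] at hlt
        linarith
      subst hr1
      simp
  · have hvne : Q - P ≠ 0 := sub_ne_zero.mpr (Ne.symm hPQ)
    have hnv : 0 < ‖Q - P‖ := norm_pos_iff.mpr hvne
    have e1 : ⟪P, Q - P⟫ = ⟪P, Q⟫ - ‖P‖^2 := by
      rw [inner_sub_right, real_inner_self_eq_norm_sq]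
    have e2 : ⟪Q, Q - P⟫ = ‖Q‖^2 - ⟪P, Q⟫ := by
      rw [inner_sub_right, real_inner_self_eq_norm_sq, real_inner_comm]
    have hnv2 : ‖Q - P‖^2 = ‖Q‖^2 - 2*⟪P, Q⟫ + ‖P‖^2 := by
      rw [norm_sub_sq_real, real_inner_comm]
    have hmain := real_main lam ‖P‖ ‖Q‖ ⟪P, Q⟫ ‖Q - P‖ r hlam (norm_nonneg P) hP
      (norm_nonneg Q) hQ hnv hnv2 hr
    rw [dF, if_neg hPQ, e1, e2, hmain]
    -- now: lam^2*(p²-2r·ip+r²q²) = (r-1)^2 ↔ ‖(1/r)•P - Q‖ = (1/lam)((r-1)/r)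
    have hsmul : ‖(1/r) • P - Q‖ = (1/r) * ‖P - r • Q‖ := by
      have h1 : (1/r) • P - Q = (1/r) • (P - r • Q) := by
        rw [smul_sub, smul_smul, one_div, inv_mul_cancel₀ hr0.ne', one_smul]
      rw [h1, norm_smul, Real.norm_eq_abs, abs_of_pos (by positivity)]
    have hN2 : ‖P - r • Q‖^2 = ‖P‖^2 - 2*r*⟪P, Q⟫ + r^2*‖Q‖^2 := by
      rw [norm_sub_sq_real, real_inner_smul_right, norm_smul, Real.norm_eq_abs,
        mul_pow, sq_abs]
      ring
    constructor
    · intro h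
      have hNval : ‖P - r • Q‖ = (r-1)/lam := by
        have h1 : ‖P - r • Q‖^2 = ((r-1)/lam)^2 := by
          rw [hN2, div_pow]
          rw [eq_div_iff (by positivity : lam^2 ≠ 0)]
          linear_combination h
        exact (sq_eq_sq₀ (norm_nonneg _) (div_nonneg (by linarith) hlam.le)).mp h1
      rw [hsmul, hNval]
      ring
    · intro h
      rw [hsmul] at h
      have hNval : ‖P - r • Q‖ = (r-1)/lam := by
        have h2 : (1/r) * ‖P - r • Q‖ = (1/r) * ((r-1)/lam) := by rw [h]; ring
        exact mul_left_cancel₀ (one_div_ne_zero hr0.ne') h2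
      have h1 := hN2.symm.trans (by rw [hNval, div_pow] : ‖P - r • Q‖^2 = (r-1)^2/lam^2)
      rw [eq_div_iff (by positivity : lam^2 ≠ 0)] at h1
      linear_combination h1
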